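/- Let T = 𝔽₂[a_σ, a_λ, w][u_σ^{±1}, u_λ^{±1}]/(a_σ²) and let β be the unique 𝔽₂-linear derivation of T with β(w) = w², β(u_σ) = a_σ, and β(a_σ) = β(a_λ) = β(u_λ) = 0. Then β(u_σ u_λ w⁴ + a_σ u_λ w³ + u_σ a_λ w² + a_σ a_λ w) = 0 and β(u_λ w) = u_λ w². -/

import Mathlib

noncomputable section

namespace StmtT

/-- The Laurent/polynomial ring `𝔽₂[a_σ, a_λ, w][u_σ^{±1}, u_λ^{±1}]`, realized as the group
algebra of `ℤ × ℤ` (the exponents of `u_σ` and `u_λ`) over `𝔽₂[a_σ, a_λ, w]`. -/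
abbrev L : Type := AddMonoidAlgebra (MvPolynomial (Fin 3) (ZMod 2)) (ℤ × ℤ)

def asL : L := AddMonoidAlgebra.single (0, 0) (MvPolynomial.X 0)

/-- `T = 𝔽₂[a_σ, a_λ, w][u_σ^{±1}, u_λ^{±1}]/(a_σ²)`. -/
abbrev T : Type := L ⧸ Ideal.span ({asL ^ 2} : Set L)

def q : L →+* T := Ideal.Quotient.mk _

/-- `a_σ` -/
def as : T := q asL
/-- `a_λ` -/
def al : T := q (AddMonoidAlgebra.single (0, 0) (MvPolynomial.X 1))
/-- `w` -/
def w : T := q (AddMonoidAlgebra.single (0, 0) (MvPolynomial.X 2))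
/-- `u_σ` -/
def us : T := q (AddMonoidAlgebra.single (1, 0) 1)
/-- `u_σ⁻¹` -/
def usInv : T := q (AddMonoidAlgebra.single (-1, 0) 1)
/-- `u_λ` -/
def ul : T := q (AddMonoidAlgebra.single (0, 1) 1)
/-- `u_λ⁻¹` -/
def ulInv : T := q (AddMonoidAlgebra.single (0, -1) 1)

/-- `e_u = u_σ u_λ w` -/
def eu : T := us * ul * w
/-- `e_λ = u_λ w²` -/
def el : T := ul * w ^ 2
/-- `e_a = u_σ u_λ w³ + u_σ a_λ w` -/
def ea : T := us * ul * w ^ 3 + us * al * w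
/-- `e_ρ = u_σ u_λ w⁴ + a_σ u_λ w³ + u_σ a_λ w² + a_σ a_λ w` -/
def er : T := us * ul * w ^ 4 + as * ul * w ^ 3 + us * al * w ^ 2 + as * al * w


end StmtT
set_option maxHeartbeats 2000000 in
/-- For any 𝔽₂-linear derivation `β` of `T` with `β(w) = w²`, `β(u_σ) = a_σ` and
`β(a_σ) = β(a_λ) = β(u_λ) = 0` (modelling the Bockstein), one has
`β(e_ρ) = 0` and `β(u_λ w) = u_λ w²`. -/
theorem stmt11 (β : Derivation (ZMod 2) StmtT.T StmtT.T)
    (hw : β StmtT.w = StmtT.w ^ 2) (hus : β StmtT.us = StmtT.as)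
    (has : β StmtT.as = 0) (hal : β StmtT.al = 0) (hul : β StmtT.ul = 0) :
    β (StmtT.us * StmtT.ul * StmtT.w ^ 4 + StmtT.as * StmtT.ul * StmtT.w ^ 3 +
        StmtT.us * StmtT.al * StmtT.w ^ 2 + StmtT.as * StmtT.al * StmtT.w) = 0 ∧
    β (StmtT.ul * StmtT.w) = StmtT.ul * StmtT.w ^ 2 := by
  have h2 : (2 : StmtT.T) = 0 := by
    rw [show (2 : StmtT.T) = algebraMap (ZMod 2) StmtT.T 2 from (map_ofNat (algebraMap (ZMod 2) StmtT.T) 2).symm]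
    simp [show (2 : ZMod 2) = 0 from rfl]
  constructor
  · simp only [map_add, Derivation.leibniz, Derivation.leibniz_pow, hw, hus, has, hal, hul,
      smul_eq_mul]
    linear_combination (2 * StmtT.us * StmtT.ul * StmtT.w ^ 5 + StmtT.us * StmtT.al * StmtT.w ^ 3
      + 2 * StmtT.as * StmtT.ul * StmtT.w ^ 4 + StmtT.as * StmtT.al * StmtT.w ^ 2) * h2
  · rw [Derivation.leibniz, hw, hul, smul_eq_mul, smul_eq_mul]
    ring
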